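/- arXiv:gr-qc/0312014 — 5 statements merged into one kernel-verified Lean document; each statement's English description precedes it below -/
import Mathlib

section
/- The quadratic Casimir function 𝒞 := (1/2) Σ_{i,j,k,l} g_{ij} g_{kl} 𝒪_{ik} 𝒪_{jl} satisfies the identity 𝒞 = −4 H₁ H₂ − D², where H₁ = (1/2)(p·p − v·v), H₂ = (1/2)(π·π − u·u), D = u·p − v·π. In particular 𝒞 vanishes on the constraint surface H₁ = H₂ = D = 0. -/
open scoped BigOperators

namespace Stmt3

abbrev Phase (np nq : ℕ) := (Fin np → ℝ) × (Fin np → ℝ) × (Fin nq → ℝ) × (Fin nq → ℝ)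

variable {np nq : ℕ}

def cross (a b : ℝ × ℝ) : ℝ := a.1 * b.2 - a.2 * b.1

/-- `x_k = (u_k, p_k)` for `k ≤ p`, `x_{p+k} = (π_k, v_k)` for `k ≤ q`. -/
def Xc (x : Phase np nq) : Fin (np + nq) → ℝ × ℝ :=
  Fin.addCases (fun i => (x.1 i, x.2.1 i)) (fun j => (x.2.2.2 j, x.2.2.1 j))

/-- The observables `𝒪_{ij} = x_i × x_j`. -/
def O (i j : Fin (np + nq)) (x : Phase np nq) : ℝ := cross (Xc x i) (Xc x j)

/-- The metric `g = diag(1,…,1,−1,…,−1)` with `p` plus and `q` minus signs. -/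
def gm (i k : Fin (np + nq)) : ℝ :=
  if i = k then (Fin.addCases (fun _ => (1:ℝ)) (fun _ => (-1:ℝ)) i) else 0

noncomputable def H1 (x : Phase np nq) : ℝ :=
  (1/2) * ((∑ i, (x.2.1 i)^2) - ∑ j, (x.2.2.1 j)^2)

noncomputable def H2 (x : Phase np nq) : ℝ :=
  (1/2) * ((∑ j, (x.2.2.2 j)^2) - ∑ i, (x.1 i)^2)

noncomputable def Dc (x : Phase np nq) : ℝ :=
  (∑ i, x.1 i * x.2.1 i) - ∑ j, x.2.2.1 j * x.2.2.2 j

/-- The quadratic Casimir `𝒞 = (1/2) Σ g_{ij} g_{kl} 𝒪_{ik} 𝒪_{jl}`. -/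
noncomputable def Cas (x : Phase np nq) : ℝ :=
  (1/2) * ∑ i, ∑ j, ∑ k, ∑ l, gm i j * gm k l * O i k x * O j l x

lemma sum_mul_sum' {ι : Type*} [Fintype ι] (f g : ι → ℝ) :
    ∑ i, ∑ k, f i * g k = (∑ i, f i) * (∑ k, g k) :=
  (Finset.sum_mul_sum _ _ _ _).symm

lemma sum_cross_sq {ι : Type*} [Fintype ι] (ε a b : ι → ℝ) :
    ∑ i, ∑ k, ε i * ε k * (a i * b k - a k * b i)^2
      = 2 * ((∑ i, ε i * (a i)^2) * (∑ i, ε i * (b i)^2) - (∑ i, ε i * a i * b i)^2) := by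
  have h : ∀ i k, ε i * ε k * (a i * b k - a k * b i)^2
      = (ε i * (a i)^2) * (ε k * (b k)^2) + (ε i * (b i)^2) * (ε k * (a k)^2)
        - (2 * (ε i * a i * b i)) * (ε k * a k * b k) := by intros; ring
  calc ∑ i, ∑ k, ε i * ε k * (a i * b k - a k * b i)^2
      = ∑ i, ∑ k, ((ε i * (a i)^2) * (ε k * (b k)^2) + (ε i * (b i)^2) * (ε k * (a k)^2)
          - (2 * (ε i * a i * b i)) * (ε k * a k * b k)) := by
        exact Finset.sum_congr rfl fun i _ => Finset.sum_congr rfl fun k _ => h i k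
    _ = (∑ i, ∑ k, (ε i * (a i)^2) * (ε k * (b k)^2))
        + (∑ i, ∑ k, (ε i * (b i)^2) * (ε k * (a k)^2))
        - ∑ i, ∑ k, (2 * (ε i * a i * b i)) * (ε k * a k * b k) := by
        simp only [Finset.sum_add_distrib, Finset.sum_sub_distrib]
    _ = (∑ i, ε i * (a i)^2) * (∑ i, ε i * (b i)^2)
        + (∑ i, ε i * (b i)^2) * (∑ i, ε i * (a i)^2)
        - (∑ i, 2 * (ε i * a i * b i)) * (∑ i, ε i * a i * b i) := by
        rw [sum_mul_sum', sum_mul_sum', sum_mul_sum']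
    _ = _ := by
        rw [show (∑ i, (2:ℝ) * (ε i * a i * b i)) = 2 * ∑ i, ε i * a i * b i from
          (Finset.mul_sum _ _ _).symm]
        ring

/-- `𝒞 = −4H₁H₂ − D²`; in particular `𝒞` vanishes on the constraint surface. -/
theorem casimir_identity (x : Phase np nq) :
    Cas x = -4 * H1 x * H2 x - (Dc x)^2 ∧
    (H1 x = 0 → H2 x = 0 → Dc x = 0 → Cas x = 0) := by
  classical
  set E : Fin (np + nq) → ℝ := fun i => Fin.addCases (fun _ => (1:ℝ)) (fun _ => (-1:ℝ)) i with hE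
  set a : Fin (np + nq) → ℝ := fun i => (Xc x i).1 with ha
  set b : Fin (np + nq) → ℝ := fun i => (Xc x i).2 with hb
  have hgm : ∀ i j, gm i j = if i = j then E i else 0 := fun i j => rfl
  have hO : ∀ i k, O i k x = a i * b k - a k * b i := by
    intro i k; simp only [O, cross, ha, hb]; ring
  have hC : Cas x = (1/2) * ∑ i, ∑ k, E i * E k * (a i * b k - a k * b i)^2 := by
    unfold Cas
    congr 1
    apply Finset.sum_congr rfl
    intro i _
    have inner : ∀ j, ∑ k, ∑ l, gm i j * gm k l * O i k x * O j l x
        = gm i j * ∑ k, E k * (O i k x * O j k x) := by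
      intro j
      rw [Finset.mul_sum]
      apply Finset.sum_congr rfl
      intro k _
      have hl : ∀ l, gm i j * gm k l * O i k x * O j l x
          = (if k = l then gm i j * (E k * (O i k x * O j l x)) else 0) := by
        intro l
        rw [hgm k l]
        by_cases hkl : k = l
        · rw [if_pos hkl, if_pos hkl]; ring
        · rw [if_neg hkl, if_neg hkl]; ring
      simp only [hl, Finset.sum_ite_eq, Finset.mem_univ, if_true]
    rw [Finset.sum_congr rfl fun j _ => inner j]
    simp only [hgm, ite_mul, zero_mul, Finset.sum_ite_eq, Finset.mem_univ, if_true]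
    rw [Finset.mul_sum]
    apply Finset.sum_congr rfl
    intro k _
    rw [hO, sq]; ring
  have key : Cas x = (∑ i, E i * (a i)^2) * (∑ i, E i * (b i)^2) - (∑ i, E i * a i * b i)^2 := by
    rw [hC, sum_cross_sq]; ring
  have hsplit : ∀ (f : ℝ × ℝ → ℝ),
      ∑ i, E i * f (Xc x i) = (∑ i, f (x.1 i, x.2.1 i)) - ∑ j, f (x.2.2.2 j, x.2.2.1 j) := by
    intro f
    rw [Fin.sum_univ_add (f := fun i => E i * f (Xc x i))]
    simp [hE, Xc, Fin.addCases_left, Fin.addCases_right, sub_eq_add_neg, ← Finset.sum_neg_distrib]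
  have h1 : (∑ i, E i * (a i)^2) = -(2 * H2 x) := by
    have t : (∑ i, E i * (a i)^2)
        = (∑ i, (x.1 i)^2) - ∑ j, (x.2.2.2 j)^2 := hsplit (fun z => z.1^2)
    rw [t]; unfold H2; ring
  have h2 : (∑ i, E i * (b i)^2) = 2 * H1 x := by
    have t : (∑ i, E i * (b i)^2)
        = (∑ i, (x.2.1 i)^2) - ∑ j, (x.2.2.1 j)^2 := hsplit (fun z => z.2^2)
    rw [t]; unfold H1; ring
  have h3 : (∑ i, E i * a i * b i) = Dc x := by
    have t : (∑ i, E i * (a i * b i))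
        = (∑ i, x.1 i * x.2.1 i) - ∑ j, x.2.2.2 j * x.2.2.1 j := hsplit (fun z => z.1 * z.2)
    rw [show (∑ i, E i * a i * b i) = ∑ i, E i * (a i * b i) from
      Finset.sum_congr rfl fun i _ => by ring, t]
    unfold Dc
    congr 1
    exact Finset.sum_congr rfl fun j _ => mul_comm _ _
  have main : Cas x = -4 * H1 x * H2 x - (Dc x)^2 := by
    rw [key, h1, h2, h3]; ring
  exact ⟨main, fun e1 e2 e3 => by rw [main, e1, e2, e3]; ring⟩

end Stmt3
end

section
/- Let V be the complex vector space with basis {Ψ_{lmn} : l ∈ ℕ, m,n ∈ ℤ, |m| ≤ l, |n| ≤ l}. Define operators L₃Ψ_{lmn} = mΨ_{lmn}, J₃Ψ_{lmn} = nΨ_{lmn}, L±Ψ_{lmn} = √((l±m+1)(l∓m)) Ψ_{l,m±1,n}, J±Ψ_{lmn} = √((l±n+1)(l∓n)) Ψ_{l,m,n±1}, and C₀Ψ_{lmn} = [√((l−m+1)(l+m+1)(l−n+1)(l+n+1))/(2l+3)] Ψ_{l+1,m,n} + [√((l−m)(l+m)(l−n)(l+n))/(2l−1)] Ψ_{l−1,m,n},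 plus C₁^+ acting as in the given table. Then any nonzero subspace U ⊆ V invariant under the algebra generated by these operators contains all basis vectors Ψ_{lmn}, i.e. the representation is irreducible. -/
namespace Stmt14

/-- The in-range predicate `|m| ≤ l ∧ |n| ≤ l`. -/
def InRange (l : ℕ) (m n : ℤ) : Prop := |m| ≤ (l:ℤ) ∧ |n| ≤ (l:ℤ)

private lemma sqrt_mul_sqrt {x y z : ℝ} (hx : 0 ≤ x) (hz : 0 ≤ z) (h : x * y = z^2) :
    Real.sqrt x * Real.sqrt y = z := by
  rw [← Real.sqrt_mul hx, h, Real.sqrt_sq hz]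

/-- Irreducibility of the `o(3,3)` observable representation on the physical state
space `V = span{Ψ_{lmn}}`: any nonzero invariant subspace is everything. -/
theorem irreducible
    (V : Type*) [AddCommGroup V] [Module ℂ V]
    (Ψ : ℕ → ℤ → ℤ → V)
    (hzero : ∀ (l : ℕ) (m n : ℤ), ¬ InRange l m n → Ψ l m n = 0)
    (hindep : LinearIndependent ℂ
      (fun t : {t : ℕ × ℤ × ℤ // InRange t.1 t.2.1 t.2.2} =>
        Ψ t.1.1 t.1.2.1 t.1.2.2))
    (hspan : Submodule.span ℂ
      (Set.range fun t : {t : ℕ × ℤ × ℤ // InRange t.1 t.2.1 t.2.2} =>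
        Ψ t.1.1 t.1.2.1 t.1.2.2) = ⊤)
    (L3 J3 Lp Lm Jp Jm C0 C1p : V →ₗ[ℂ] V)
    (hL3 : ∀ (l : ℕ) (m n : ℤ), InRange l m n → L3 (Ψ l m n) = (m:ℂ) • Ψ l m n)
    (hJ3 : ∀ (l : ℕ) (m n : ℤ), InRange l m n → J3 (Ψ l m n) = (n:ℂ) • Ψ l m n)
    (hLp : ∀ (l : ℕ) (m n : ℤ), InRange l m n →
      Lp (Ψ l m n) = (Real.sqrt (((l:ℝ) + m + 1) * ((l:ℝ) - m)) : ℂ) • Ψ l (m+1) n)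
    (hLm : ∀ (l : ℕ) (m n : ℤ), InRange l m n →
      Lm (Ψ l m n) = (Real.sqrt (((l:ℝ) - m + 1) * ((l:ℝ) + m)) : ℂ) • Ψ l (m-1) n)
    (hJp : ∀ (l : ℕ) (m n : ℤ), InRange l m n →
      Jp (Ψ l m n) = (Real.sqrt (((l:ℝ) + n + 1) * ((l:ℝ) - n)) : ℂ) • Ψ l m (n+1))
    (hJm : ∀ (l : ℕ) (m n : ℤ), InRange l m n →
      Jm (Ψ l m n) = (Real.sqrt (((l:ℝ) - n + 1) * ((l:ℝ) + n)) : ℂ) • Ψ l m (n-1))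
    (hC0 : ∀ (l : ℕ) (m n : ℤ), InRange l m n →
      C0 (Ψ l m n) =
        ((Real.sqrt (((l:ℝ) - m + 1) * ((l:ℝ) + m + 1) * ((l:ℝ) - n + 1) * ((l:ℝ) + n + 1))
            / (2*(l:ℝ) + 3) : ℝ) : ℂ) • Ψ (l+1) m n
        + ((Real.sqrt (((l:ℝ) - m) * ((l:ℝ) + m) * ((l:ℝ) - n) * ((l:ℝ) + n))
            / (2*(l:ℝ) - 1) : ℝ) : ℂ) • Ψ (l-1) m n)
    (hC1p : ∀ (l : ℕ) (m n : ℤ), InRange l m n →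
      C1p (Ψ l m n) =
        (-(Real.sqrt (((l:ℝ) - m + 1) * ((l:ℝ) + m + 1) * ((l:ℝ) + n + 1) * ((l:ℝ) + n + 2))
            / (2*(l:ℝ) + 3) : ℝ) : ℂ) • Ψ (l+1) m (n+1)
        + ((Real.sqrt (((l:ℝ) - m) * ((l:ℝ) + m) * ((l:ℝ) - n) * ((l:ℝ) - n - 1))
            / (2*(l:ℝ) - 1) : ℝ) : ℂ) • Ψ (l-1) m (n+1))
    (U : Submodule ℂ V)
    (hU : ∀ x ∈ U, L3 x ∈ U ∧ J3 x ∈ U ∧ Lp x ∈ U ∧ Lm x ∈ U ∧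
        Jp x ∈ U ∧ Jm x ∈ U ∧ C0 x ∈ U ∧ C1p x ∈ U)
    (hne : U ≠ ⊥) :
    U = ⊤ := by
  classical
  -- abbreviation for the basis family
  set T := {t : ℕ × ℤ × ℤ // InRange t.1 t.2.1 t.2.2} with hT
  set Φ : T → V := fun t => Ψ t.1.1 t.1.2.1 t.1.2.2 with hΦ
  -- membership from a nonzero scalar multiple
  have memSmul : ∀ (c : ℂ) (v : V), c ≠ 0 → c • v ∈ U → v ∈ U := by
    intro c v hc h
    have h2 := U.smul_mem c⁻¹ h
    rwa [smul_smul, inv_mul_cancel₀ hc, one_smul] at h2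
  -- step lemmas
  have stepLp : ∀ (l:ℕ) (m n:ℤ), InRange l m n → InRange l (m+1) n →
      Ψ l m n ∈ U → Ψ l (m+1) n ∈ U := by
    intro l m n h h' hm
    have hx := (hU _ hm).2.2.1
    rw [hLp l m n h] at hx
    refine memSmul _ _ ?_ hx
    obtain ⟨h1, h2⟩ := abs_le.mp h.1
    obtain ⟨h3, h4⟩ := abs_le.mp h'.1
    have e1 : (0:ℤ) < (l:ℤ) + m + 1 := by omega
    have e2 : (0:ℤ) < (l:ℤ) - m := by omega
    have e1' : (0:ℝ) < (l:ℝ) + m + 1 := by exact_mod_cast e1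
    have e2' : (0:ℝ) < (l:ℝ) - m := by exact_mod_cast e2
    exact Complex.ofReal_ne_zero.mpr (ne_of_gt (Real.sqrt_pos.mpr (mul_pos e1' e2')))
  have stepLm : ∀ (l:ℕ) (m n:ℤ), InRange l m n → InRange l (m-1) n →
      Ψ l m n ∈ U → Ψ l (m-1) n ∈ U := by
    intro l m n h h' hm
    have hx := (hU _ hm).2.2.2.1
    rw [hLm l m n h] at hx
    refine memSmul _ _ ?_ hx
    obtain ⟨h1, h2⟩ := abs_le.mp h.1
    obtain ⟨h3, h4⟩ := abs_le.mp h'.1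
    have e1 : (0:ℤ) < (l:ℤ) - m + 1 := by omega
    have e2 : (0:ℤ) < (l:ℤ) + m := by omega
    have e1' : (0:ℝ) < (l:ℝ) - m + 1 := by exact_mod_cast e1
    have e2' : (0:ℝ) < (l:ℝ) + m := by exact_mod_cast e2
    exact Complex.ofReal_ne_zero.mpr (ne_of_gt (Real.sqrt_pos.mpr (mul_pos e1' e2')))
  have stepJp : ∀ (l:ℕ) (m n:ℤ), InRange l m n → InRange l m (n+1) →
      Ψ l m n ∈ U → Ψ l m (n+1) ∈ U := by
    intro l m n h h' hm
    have hx := (hU _ hm).2.2.2.2.1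
    rw [hJp l m n h] at hx
    refine memSmul _ _ ?_ hx
    obtain ⟨h1, h2⟩ := abs_le.mp h.2
    obtain ⟨h3, h4⟩ := abs_le.mp h'.2
    have e1 : (0:ℤ) < (l:ℤ) + n + 1 := by omega
    have e2 : (0:ℤ) < (l:ℤ) - n := by omega
    have e1' : (0:ℝ) < (l:ℝ) + n + 1 := by exact_mod_cast e1
    have e2' : (0:ℝ) < (l:ℝ) - n := by exact_mod_cast e2
    exact Complex.ofReal_ne_zero.mpr (ne_of_gt (Real.sqrt_pos.mpr (mul_pos e1' e2')))
  have stepJm : ∀ (l:ℕ) (m n:ℤ), InRange l m n → InRange l m (n-1) →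
      Ψ l m n ∈ U → Ψ l m (n-1) ∈ U := by
    intro l m n h h' hm
    have hx := (hU _ hm).2.2.2.2.2.1
    rw [hJm l m n h] at hx
    refine memSmul _ _ ?_ hx
    obtain ⟨h1, h2⟩ := abs_le.mp h.2
    obtain ⟨h3, h4⟩ := abs_le.mp h'.2
    have e1 : (0:ℤ) < (l:ℤ) - n + 1 := by omega
    have e2 : (0:ℤ) < (l:ℤ) + n := by omega
    have e1' : (0:ℝ) < (l:ℝ) - n + 1 := by exact_mod_cast e1
    have e2' : (0:ℝ) < (l:ℝ) + n := by exact_mod_cast e2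
    exact Complex.ofReal_ne_zero.mpr (ne_of_gt (Real.sqrt_pos.mpr (mul_pos e1' e2')))
  -- move along m within fixed l, n
  have levelM : ∀ (l:ℕ) (n m:ℤ), InRange l m n → (Ψ l m n ∈ U ↔ Ψ l 0 n ∈ U) := by
    intro l n m
    induction m using Int.induction_on with
    | zero => exact fun _ => Iff.rfl
    | succ i ih =>
      intro h
      have hi : InRange l (i:ℤ) n := by
        refine ⟨?_, h.2⟩
        have := abs_le.mp h.1
        rw [abs_le]; omega
      constructor
      · intro hmem
        have h' := stepLm l ((i:ℤ)+1) n h (by rw [show (i:ℤ)+1-1 = (i:ℤ) by ring]; exact hi) hmem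
        rw [show (i:ℤ)+1-1 = (i:ℤ) by ring] at h'
        exact (ih hi).mp h'
      · intro hmem
        exact stepLp l i n hi h ((ih hi).mpr hmem)
    | pred i ih =>
      intro h
      have hi : InRange l (-(i:ℤ)) n := by
        refine ⟨?_, h.2⟩
        have := abs_le.mp h.1
        rw [abs_le]; omega
      constructor
      · intro hmem
        have h' := stepLp l (-(i:ℤ)-1) n h (by rw [show -(i:ℤ)-1+1 = -(i:ℤ) by ring]; exact hi) hmem
        rw [show -(i:ℤ)-1+1 = -(i:ℤ) by ring] at h'
        exact (ih hi).mp h'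
      · intro hmem
        exact stepLm l (-(i:ℤ)) n hi h ((ih hi).mpr hmem)
  have levelN : ∀ (l:ℕ) (m n:ℤ), InRange l m n → (Ψ l m n ∈ U ↔ Ψ l m 0 ∈ U) := by
    intro l m n
    induction n using Int.induction_on with
    | zero => exact fun _ => Iff.rfl
    | succ i ih =>
      intro h
      have hi : InRange l m (i:ℤ) := by
        refine ⟨h.1, ?_⟩
        have := abs_le.mp h.2
        rw [abs_le]; omega
      constructor
      · intro hmem
        have h' := stepJm l m ((i:ℤ)+1) h (by rw [show (i:ℤ)+1-1 = (i:ℤ) by ring]; exact hi) hmem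
        rw [show (i:ℤ)+1-1 = (i:ℤ) by ring] at h'
        exact (ih hi).mp h'
      · intro hmem
        exact stepJp l m i hi h ((ih hi).mpr hmem)
    | pred i ih =>
      intro h
      have hi : InRange l m (-(i:ℤ)) := by
        refine ⟨h.1, ?_⟩
        have := abs_le.mp h.2
        rw [abs_le]; omega
      constructor
      · intro hmem
        have h' := stepJp l m (-(i:ℤ)-1) h (by rw [show -(i:ℤ)-1+1 = -(i:ℤ) by ring]; exact hi) hmem
        rw [show -(i:ℤ)-1+1 = -(i:ℤ) by ring] at h'
        exact (ih hi).mp h'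
      · intro hmem
        exact stepJm l m (-(i:ℤ)) hi h ((ih hi).mpr hmem)
  have bridge : ∀ (l:ℕ) (m n:ℤ), InRange l m n → (Ψ l m n ∈ U ↔ Ψ l 0 0 ∈ U) := by
    intro l m n h
    exact (levelN l m n h).trans (levelM l 0 m ⟨h.1, by simp⟩)
  -- the l-ladder
  have key2 : ∀ l : ℕ, C0 (Ψ l 0 0) =
      (((((l:ℝ)+1)^2 / (2*(l:ℝ)+3) : ℝ)) : ℂ) • Ψ (l+1) 0 0
      + ((((l:ℝ)^2 / (2*(l:ℝ)-1) : ℝ)) : ℂ) • Ψ (l-1) 0 0 := by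
    intro l
    have hr : InRange l 0 0 := ⟨by simp, by simp⟩
    have e1 : Real.sqrt (((l:ℝ) - 0 + 1) * ((l:ℝ) + 0 + 1) * ((l:ℝ) - 0 + 1) * ((l:ℝ) + 0 + 1))
        = ((l:ℝ)+1)^2 := by
      rw [show ((l:ℝ) - 0 + 1) * ((l:ℝ) + 0 + 1) * ((l:ℝ) - 0 + 1) * ((l:ℝ) + 0 + 1)
          = (((l:ℝ)+1)^2)^2 by ring]
      exact Real.sqrt_sq (by positivity)
    have e2 : Real.sqrt (((l:ℝ) - 0) * ((l:ℝ) + 0) * ((l:ℝ) - 0) * ((l:ℝ) + 0))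
        = (l:ℝ)^2 := by
      rw [show ((l:ℝ) - 0) * ((l:ℝ) + 0) * ((l:ℝ) - 0) * ((l:ℝ) + 0) = ((l:ℝ)^2)^2 by ring]
      exact Real.sqrt_sq (by positivity)
    rw [hC0 l 0 0 hr]
    simp only [Int.cast_zero]
    rw [e1, e2]

  have key1 : ∀ l : ℕ, Jm (C1p (Ψ l 0 0)) =
      ((-((((l:ℝ)+1)^2*((l:ℝ)+2)) / (2*(l:ℝ)+3)) : ℝ) : ℂ) • Ψ (l+1) 0 0
      + ((((l:ℝ)^2*((l:ℝ)-1) / (2*(l:ℝ)-1)) : ℝ) : ℂ) • Ψ (l-1) 0 0 := by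
    intro l
    have hr : InRange l 0 0 := ⟨by simp, by simp⟩
    rw [hC1p l 0 0 hr, map_add, map_smul, map_smul]
    have hr1 : InRange (l+1) 0 (0+1) := ⟨by rw [abs_le]; omega, by rw [abs_le]; omega⟩
    rw [hJm (l+1) 0 (0+1) hr1]
    by_cases hl : 2 ≤ l
    · obtain ⟨k, rfl⟩ : ∃ k, l = k + 2 := ⟨l - 2, by omega⟩
      have hr2 : InRange (k+2-1) 0 (0+1) := ⟨by rw [abs_le]; omega, by rw [abs_le]; omega⟩
      rw [hJm (k+2-1) 0 (0+1) hr2]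
      simp only [show k+2-1 = k+1 by omega, show (0:ℤ)+1-1 = 0 by norm_num]
      have hk : (0:ℝ) ≤ (k:ℝ) := Nat.cast_nonneg k
      have hs1 : Real.sqrt (((k:ℝ) + 2 - 0 + 1) * ((k:ℝ) + 2 + 0 + 1) * ((k:ℝ) + 2 + 0 + 1) * ((k:ℝ) + 2 + 0 + 2))
          * Real.sqrt (((k:ℝ) + 2 + 1 - (0 + 1) + 1) * ((k:ℝ) + 2 + 1 + (0 + 1)))
          = ((k:ℝ)+3)^2*((k:ℝ)+4) := by
        apply sqrt_mul_sqrt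
        · refine mul_nonneg (mul_nonneg (mul_nonneg ?_ ?_) ?_) ?_ <;> linarith
        · positivity
        · ring
      have hs1c : ((Real.sqrt (((k:ℝ) + 2 - 0 + 1) * ((k:ℝ) + 2 + 0 + 1) * ((k:ℝ) + 2 + 0 + 1) * ((k:ℝ) + 2 + 0 + 2)) : ℝ) : ℂ)
          * ((Real.sqrt (((k:ℝ) + 2 + 1 - (0 + 1) + 1) * ((k:ℝ) + 2 + 1 + (0 + 1))) : ℝ) : ℂ)
          = ((k:ℂ)+3)^2*((k:ℂ)+4) := by exact_mod_cast hs1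
      have hs2 : Real.sqrt (((k:ℝ) + 2 - 0) * ((k:ℝ) + 2 + 0) * ((k:ℝ) + 2 - 0) * ((k:ℝ) + 2 - 0 - 1))
          * Real.sqrt (((k:ℝ) + 1 - (0 + 1) + 1) * ((k:ℝ) + 1 + (0 + 1)))
          = ((k:ℝ)+2)^2*((k:ℝ)+1) := by
        apply sqrt_mul_sqrt
        · refine mul_nonneg (mul_nonneg (mul_nonneg ?_ ?_) ?_) ?_ <;> linarith
        · positivity
        · ring
      have hs2c : ((Real.sqrt (((k:ℝ) + 2 - 0) * ((k:ℝ) + 2 + 0) * ((k:ℝ) + 2 - 0) * ((k:ℝ) + 2 - 0 - 1)) : ℝ) : ℂ)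
          * ((Real.sqrt (((k:ℝ) + 1 - (0 + 1) + 1) * ((k:ℝ) + 1 + (0 + 1))) : ℝ) : ℂ)
          = ((k:ℂ)+2)^2*((k:ℂ)+1) := by exact_mod_cast hs2
      match_scalars
      · push_cast
        first
        | linear_combination (-(1/(2*(k:ℝ)+7))) * hs1
        | linear_combination (-(1/(2*(k:ℂ)+7))) * hs1c
      · push_cast
        first
        | linear_combination (1/(2*(k:ℝ)+3)) * hs2
        | linear_combination (1/(2*(k:ℂ)+3)) * hs2c
    · have hz2 : Ψ (l-1) 0 (0+1) = 0 := by
        apply hzero; intro hcon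
        obtain ⟨_, h2⟩ := hcon; rw [abs_le] at h2; omega
      rw [hz2, map_zero, smul_zero]
      interval_cases l
      · simp only [show ((0:ℤ)+1-1) = 0 by norm_num]
        match_scalars
        push_cast
        norm_num
        have hs : ((Real.sqrt 2 : ℝ) : ℂ) * ((Real.sqrt 2 : ℝ) : ℂ) = 2 := by
          exact_mod_cast Real.mul_self_sqrt (by norm_num : (0:ℝ) ≤ 2)
        linear_combination (1/3 : ℂ) * hs
        norm_num
      · simp only [show ((0:ℤ)+1-1) = 0 by norm_num]
        match_scalars
        push_cast
        norm_num
        have hs : ((Real.sqrt 24 : ℝ) : ℂ) * ((Real.sqrt 6 : ℝ) : ℂ) = 12 := by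
          exact_mod_cast sqrt_mul_sqrt (by norm_num) (by norm_num) (by norm_num : (24:ℝ) * 6 = 12^2)
        linear_combination (1/5 : ℂ) * hs
        norm_num

  have upMove : ∀ l : ℕ, Ψ l 0 0 ∈ U → Ψ (l+1) 0 0 ∈ U := by
    intro l hmem
    have hr1 : (2*(l:ℝ)-1) ≠ 0 := by
      rcases Nat.eq_zero_or_pos l with h|h
      · subst h; norm_num
      · have : (1:ℝ) ≤ (l:ℝ) := by exact_mod_cast h
        nlinarith
    have hr3 : (2*(l:ℝ)+3) ≠ 0 := by positivity
    have hc1 : (2*(l:ℂ)-1) ≠ 0 := by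
      have h' := Complex.ofReal_ne_zero.mpr hr1
      push_cast at h'; exact h'
    have hc3 : (2*(l:ℂ)+3) ≠ 0 := by
      have h' := Complex.ofReal_ne_zero.mpr hr3
      push_cast at h'; exact h'
    have h1 : Jm (C1p (Ψ l 0 0)) ∈ U := (hU _ ((hU _ hmem).2.2.2.2.2.2.2)).2.2.2.2.2.1
    have h2 : C0 (Ψ l 0 0) ∈ U := (hU _ hmem).2.2.2.2.2.2.1
    have h3 : Jm (C1p (Ψ l 0 0)) - (((l:ℝ) - 1 : ℝ) : ℂ) • C0 (Ψ l 0 0) ∈ U :=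
      U.sub_mem h1 (U.smul_mem _ h2)
    rw [key1 l, key2 l] at h3
    have heq : (((-((((l:ℝ)+1)^2*((l:ℝ)+2)) / (2*(l:ℝ)+3)) : ℝ) : ℂ) • Ψ (l+1) 0 0
          + ((((l:ℝ)^2*((l:ℝ)-1) / (2*(l:ℝ)-1)) : ℝ) : ℂ) • Ψ (l-1) 0 0)
        - (((l:ℝ) - 1 : ℝ) : ℂ) • ((((((l:ℝ)+1)^2 / (2*(l:ℝ)+3) : ℝ)) : ℂ) • Ψ (l+1) 0 0
          + ((((l:ℝ)^2 / (2*(l:ℝ)-1) : ℝ)) : ℂ) • Ψ (l-1) 0 0)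
        = ((-((((l:ℝ)+1)^2*(2*(l:ℝ)+1)) / (2*(l:ℝ)+3)) : ℝ) : ℂ) • Ψ (l+1) 0 0 := by
      match_scalars
      · push_cast; ring
      · push_cast; ring
    rw [heq] at h3
    refine memSmul _ _ ?_ h3
    have hpos : (0:ℝ) < (((l:ℝ)+1)^2*(2*(l:ℝ)+1)) / (2*(l:ℝ)+3) := by positivity
    exact Complex.ofReal_ne_zero.mpr (neg_ne_zero.mpr (ne_of_gt hpos))
  have downMove : ∀ l : ℕ, Ψ (l+1) 0 0 ∈ U → Ψ l 0 0 ∈ U := by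
    intro l hmem
    have hr1 : (2*((l+1:ℕ):ℝ)-1) ≠ 0 := by push_cast; nlinarith [Nat.cast_nonneg (α := ℝ) l]
    have hr3 : (2*((l+1:ℕ):ℝ)+3) ≠ 0 := by positivity
    have hc1 : (2*((l:ℂ)+1)-1) ≠ 0 := by
      have h' := Complex.ofReal_ne_zero.mpr hr1
      push_cast at h'; exact h'
    have hc3 : (2*((l:ℂ)+1)+3) ≠ 0 := by
      have h' := Complex.ofReal_ne_zero.mpr hr3
      push_cast at h'; exact h'
    have h1 : Jm (C1p (Ψ (l+1) 0 0)) ∈ U := (hU _ ((hU _ hmem).2.2.2.2.2.2.2)).2.2.2.2.2.1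
    have h2 : C0 (Ψ (l+1) 0 0) ∈ U := (hU _ hmem).2.2.2.2.2.2.1
    have h3 : (((((l+1:ℕ):ℝ)+1)^2 / (2*((l+1:ℕ):ℝ)+3) : ℝ) : ℂ) • Jm (C1p (Ψ (l+1) 0 0))
        - ((-(((((l+1:ℕ):ℝ)+1)^2*(((l+1:ℕ):ℝ)+2)) / (2*((l+1:ℕ):ℝ)+3)) : ℝ) : ℂ) • C0 (Ψ (l+1) 0 0) ∈ U :=
      U.sub_mem (U.smul_mem _ h1) (U.smul_mem _ h2)
    rw [key1 (l+1), key2 (l+1)] at h3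
    simp only [Nat.add_sub_cancel] at h3
    set w : ℝ := ((l:ℝ)+2)^2/(2*((l:ℝ)+1)+3) * (((l:ℝ)+1)^2*(l:ℝ)/(2*((l:ℝ)+1)-1))
      + ((l:ℝ)+2)^2*((l:ℝ)+3)/(2*((l:ℝ)+1)+3) * (((l:ℝ)+1)^2/(2*((l:ℝ)+1)-1)) with hw
    have heq : (((((l+1:ℕ):ℝ)+1)^2 / (2*((l+1:ℕ):ℝ)+3) : ℝ) : ℂ)
          • (((-(((((l+1:ℕ):ℝ)+1)^2*(((l+1:ℕ):ℝ)+2)) / (2*((l+1:ℕ):ℝ)+3)) : ℝ) : ℂ) • Ψ (l+1+1) 0 0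
            + ((((((l+1:ℕ):ℝ))^2*(((l+1:ℕ):ℝ)-1) / (2*((l+1:ℕ):ℝ)-1)) : ℝ) : ℂ) • Ψ l 0 0)
        - ((-(((((l+1:ℕ):ℝ)+1)^2*(((l+1:ℕ):ℝ)+2)) / (2*((l+1:ℕ):ℝ)+3)) : ℝ) : ℂ)
          • ((((((l+1:ℕ):ℝ)+1)^2 / (2*((l+1:ℕ):ℝ)+3) : ℝ) : ℂ) • Ψ (l+1+1) 0 0
            + (((((l+1:ℕ):ℝ))^2 / (2*((l+1:ℕ):ℝ)-1) : ℝ) : ℂ) • Ψ l 0 0)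
        = ((w : ℝ) : ℂ) • Ψ l 0 0 := by
      match_scalars
      · push_cast; ring
      · rw [hw]; push_cast; ring
    rw [heq] at h3
    refine memSmul _ _ ?_ h3
    have hpos : (0:ℝ) < w := by
      rw [hw, show 2*((l:ℝ)+1)-1 = 2*(l:ℝ)+1 from by ring,
        show 2*((l:ℝ)+1)+3 = 2*(l:ℝ)+5 from by ring]
      positivity
    exact Complex.ofReal_ne_zero.mpr (ne_of_gt hpos)
  -- the separation argument
  have exists_basis_mem : ∃ t : T, Φ t ∈ U := by
    -- the operator L² and its diagonal action
    set Lsq : V →ₗ[ℂ] V := L3 ∘ₗ L3 + (2⁻¹ : ℂ) • (Lp ∘ₗ Lm + Lm ∘ₗ Lp) with hLsqdef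
    have hLpLm : ∀ (l:ℕ) (m n:ℤ), InRange l m n →
        Lp (Lm (Ψ l m n)) = ((((l:ℝ) - m + 1) * ((l:ℝ) + m) : ℝ) : ℂ) • Ψ l m n := by
      intro l m n h
      rw [hLm l m n h, map_smul]
      by_cases h' : InRange l (m-1) n
      · rw [hLp l (m-1) n h', show m - 1 + 1 = m from by ring, smul_smul,
          ← Complex.ofReal_mul]
        obtain ⟨hm1, hm2⟩ := abs_le.mp h.1
        obtain ⟨hk1, hk2⟩ := abs_le.mp h'.1
        have hm2' : (m:ℝ) ≤ (l:ℝ) := by exact_mod_cast hm2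
        have hk1' : (-(l:ℤ):ℝ) ≤ ((m-1:ℤ):ℝ) := by exact_mod_cast hk1
        push_cast at hk1'
        have hs : Real.sqrt (((l:ℝ) - m + 1) * ((l:ℝ) + m))
            * Real.sqrt (((l:ℝ) + ((m:ℝ)-1) + 1) * ((l:ℝ) - ((m:ℝ)-1)))
            = ((l:ℝ) - m + 1) * ((l:ℝ) + m) := by
          apply sqrt_mul_sqrt
          · exact mul_nonneg (by linarith) (by linarith)
          · exact mul_nonneg (by linarith) (by linarith)
          · ring
        rw [show (((l:ℝ) + ((m-1:ℤ):ℝ) + 1) * ((l:ℝ) - ((m-1:ℤ):ℝ)))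
            = (((l:ℝ) + ((m:ℝ)-1) + 1) * ((l:ℝ) - ((m:ℝ)-1))) from by push_cast; ring, hs]
      · have hm0 : m = -(l:ℤ) := by
          have h2 : ¬((-(l:ℤ) ≤ m-1) ∧ (m-1 ≤ (l:ℤ))) := fun hh => h' ⟨abs_le.mpr hh, h.2⟩
          obtain ⟨hm1, hm2⟩ := abs_le.mp h.1
          rcases not_and_or.mp h2 with h5|h5 <;> (push_neg at h5; omega)
        rw [hzero l (m-1) n h', map_zero, smul_zero]
        have hscal : (((l:ℝ) - m + 1) * ((l:ℝ) + m) : ℝ) = 0 := by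
          rw [hm0]; push_cast; ring
        rw [hscal]
        simp
    have hLmLp : ∀ (l:ℕ) (m n:ℤ), InRange l m n →
        Lm (Lp (Ψ l m n)) = ((((l:ℝ) + m + 1) * ((l:ℝ) - m) : ℝ) : ℂ) • Ψ l m n := by
      intro l m n h
      rw [hLp l m n h, map_smul]
      by_cases h' : InRange l (m+1) n
      · rw [hLm l (m+1) n h', show m + 1 - 1 = m from by ring, smul_smul,
          ← Complex.ofReal_mul]
        obtain ⟨hm1, hm2⟩ := abs_le.mp h.1
        obtain ⟨hk1, hk2⟩ := abs_le.mp h'.1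
        have hm1' : (-(l:ℤ):ℝ) ≤ (m:ℝ) := by exact_mod_cast hm1
        push_cast at hm1'
        have hk2' : ((m+1:ℤ):ℝ) ≤ (l:ℝ) := by exact_mod_cast hk2
        push_cast at hk2'
        have hs : Real.sqrt (((l:ℝ) + m + 1) * ((l:ℝ) - m))
            * Real.sqrt (((l:ℝ) - ((m:ℝ)+1) + 1) * ((l:ℝ) + ((m:ℝ)+1)))
            = ((l:ℝ) + m + 1) * ((l:ℝ) - m) := by
          apply sqrt_mul_sqrt
          · exact mul_nonneg (by linarith) (by linarith)
          · exact mul_nonneg (by linarith) (by linarith)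
          · ring
        rw [show (((l:ℝ) - ((m+1:ℤ):ℝ) + 1) * ((l:ℝ) + ((m+1:ℤ):ℝ)))
            = (((l:ℝ) - ((m:ℝ)+1) + 1) * ((l:ℝ) + ((m:ℝ)+1))) from by push_cast; ring, hs]
      · have hm0 : m = (l:ℤ) := by
          have h2 : ¬((-(l:ℤ) ≤ m+1) ∧ (m+1 ≤ (l:ℤ))) := fun hh => h' ⟨abs_le.mpr hh, h.2⟩
          obtain ⟨hm1, hm2⟩ := abs_le.mp h.1
          rcases not_and_or.mp h2 with h5|h5 <;> (push_neg at h5; omega)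
        rw [hzero l (m+1) n h', map_zero, smul_zero]
        have hscal : (((l:ℝ) + m + 1) * ((l:ℝ) - m) : ℝ) = 0 := by
          rw [hm0]; push_cast; ring
        rw [hscal]
        simp
    have hESq : ∀ (l:ℕ) (m n:ℤ), InRange l m n →
        Lsq (Ψ l m n) = ((l:ℂ) * ((l:ℂ) + 1)) • Ψ l m n := by
      intro l m n h
      rw [hLsqdef]
      simp only [LinearMap.add_apply, LinearMap.comp_apply, LinearMap.smul_apply]
      rw [hL3 l m n h, map_smul, hL3 l m n h, hLpLm l m n h, hLmLp l m n h]
      match_scalars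
      push_cast
      ring
    have hULsq : ∀ x ∈ U, Lsq x ∈ U := by
      intro x hx
      rw [hLsqdef]
      simp only [LinearMap.add_apply, LinearMap.comp_apply, LinearMap.smul_apply]
      exact U.add_mem ((hU _ (hU x hx).1).1)
        (U.smul_mem _ (U.add_mem ((hU _ (hU x hx).2.2.2.1).2.2.1)
          ((hU _ (hU x hx).2.2.1).2.2.2.1)))
    -- distinguishing operators
    have lsq_ne : ∀ a b : ℕ, a ≠ b → (a:ℂ) * ((a:ℂ)+1) ≠ (b:ℂ) * ((b:ℂ)+1) := by
      have key : ∀ a b : ℕ, a < b → (a:ℂ) * ((a:ℂ)+1) ≠ (b:ℂ) * ((b:ℂ)+1) := by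
        intro a b hab h
        have h2 : ((a*(a+1) : ℕ) : ℂ) = ((b*(b+1) : ℕ) : ℂ) := by push_cast; linear_combination h
        have h3 : (a*(a+1) : ℕ) = (b*(b+1) : ℕ) := Nat.cast_injective h2
        nlinarith
      intro a b hab
      rcases lt_or_gt_of_ne hab with h|h
      · exact key a b h
      · exact fun hh => key b a h hh.symm
    have distinguish : ∀ t₀ t₁ : T, t₀ ≠ t₁ →
        ∃ A : V →ₗ[ℂ] V, (∀ x ∈ U, A x ∈ U) ∧ ∃ lam : T → ℂ,
          (∀ t, A (Φ t) = lam t • Φ t) ∧ lam t₀ ≠ lam t₁ := by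
      rintro ⟨⟨l₀, m₀, n₀⟩, h₀⟩ ⟨⟨l₁, m₁, n₁⟩, h₁⟩ hne'
      by_cases hm : m₀ = m₁
      · by_cases hn : n₀ = n₁
        · have hl : l₀ ≠ l₁ := by
            intro hl
            exact hne' (by subst hm; subst hn; subst hl; rfl)
          refine ⟨Lsq, hULsq, fun t => ((t.1.1 : ℂ) * ((t.1.1 : ℂ)+1)), ?_, ?_⟩
          · intro t
            exact hESq t.1.1 t.1.2.1 t.1.2.2 t.2
          · exact lsq_ne l₀ l₁ hl
        · refine ⟨J3, fun x hx => (hU x hx).2.1, fun t => (t.1.2.2 : ℂ), ?_, ?_⟩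
          · intro t
            exact hJ3 t.1.1 t.1.2.1 t.1.2.2 t.2
          · intro hh
            apply hn
            have hh2 : (n₀:ℂ) = (n₁:ℂ) := hh
            exact_mod_cast hh2
      · refine ⟨L3, fun x hx => (hU x hx).1, fun t => (t.1.2.1 : ℂ), ?_, ?_⟩
        · intro t
          exact hL3 t.1.1 t.1.2.1 t.1.2.2 t.2
        · intro hh
          apply hm
          have hh2 : (m₀:ℂ) = (m₁:ℂ) := hh
          exact_mod_cast hh2
    -- separation by eigenvalues
    have sep : ∀ s : Finset T, ∀ c : T → ℂ, (∑ t ∈ s, c t • Φ t) ∈ U →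
        ∀ t₀ ∈ s, c t₀ ≠ 0 → Φ t₀ ∈ U := by
      intro s
      induction s using Finset.strongInduction with
      | _ s ih =>
        intro c hsum t₀ ht₀ hc
        by_cases hone : ∀ t ∈ s, t = t₀
        · have hs : s = {t₀} := Finset.eq_singleton_iff_unique_mem.mpr ⟨ht₀, hone⟩
          rw [hs, Finset.sum_singleton] at hsum
          exact memSmul _ _ hc hsum
        · push_neg at hone
          obtain ⟨t₁, ht₁, hne1⟩ := hone
          obtain ⟨A, hAU, lam, hAe, hlamne⟩ := distinguish t₀ t₁ (Ne.symm hne1)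
          have hy : (∑ t ∈ s, (c t * (lam t - lam t₁)) • Φ t) ∈ U := by
            have h2 := U.sub_mem (hAU _ hsum) (U.smul_mem (lam t₁) hsum)
            have h3 : A (∑ t ∈ s, c t • Φ t) - lam t₁ • (∑ t ∈ s, c t • Φ t)
                = ∑ t ∈ s, (c t * (lam t - lam t₁)) • Φ t := by
              rw [map_sum, Finset.smul_sum, ← Finset.sum_sub_distrib]
              refine Finset.sum_congr rfl fun t _ => ?_
              rw [map_smul, hAe t]
              module
            rwa [h3] at h2
          have hy' : (∑ t ∈ s.erase t₁, (c t * (lam t - lam t₁)) • Φ t) ∈ U := by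
            rwa [Finset.sum_erase _ (by simp)] 
          exact ih (s.erase t₁) (Finset.erase_ssubset ht₁) _ hy' t₀
            (Finset.mem_erase.mpr ⟨Ne.symm hne1, ht₀⟩)
            (mul_ne_zero hc (sub_ne_zero.mpr hlamne))
    -- extract a basis vector from a nonzero element of U
    obtain ⟨x, hxU, hx0⟩ := Submodule.exists_mem_ne_zero_of_ne_bot hne
    set B : Module.Basis T ℂ V := Module.Basis.mk hindep hspan.ge with hB
    have hBapp : ∀ t, B t = Φ t := fun t => Module.Basis.mk_apply hindep hspan.ge t
    have hrepr : ∑ t ∈ (B.repr x).support, (B.repr x) t • Φ t = x := by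
      have h1 := B.linearCombination_repr x
      rw [Finsupp.linearCombination_apply, Finsupp.sum] at h1
      calc ∑ t ∈ (B.repr x).support, (B.repr x) t • Φ t
          = ∑ t ∈ (B.repr x).support, (B.repr x) t • B t :=
            Finset.sum_congr rfl fun t _ => by rw [hBapp]
        _ = x := h1
    have hne0 : B.repr x ≠ 0 := by
      intro h
      apply hx0
      have := congrArg B.repr.symm h
      simpa using this
    obtain ⟨t₀, ht₀⟩ := Finsupp.ne_iff.mp hne0
    simp only [Finsupp.coe_zero, Pi.zero_apply] at ht₀
    exact ⟨t₀, sep _ _ (by rwa [hrepr]) t₀ (Finsupp.mem_support_iff.mpr ht₀) ht₀⟩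
  -- assembling
  obtain ⟨⟨⟨l₀, m₀, n₀⟩, hr₀⟩, ht₀⟩ := exists_basis_mem
  have h00 : Ψ l₀ 0 0 ∈ U := (bridge l₀ m₀ n₀ hr₀).mp ht₀
  have hzero00 : Ψ 0 0 0 ∈ U := by
    clear ht₀ hr₀
    induction l₀ with
    | zero => exact h00
    | succ k ih => exact ih (downMove k h00)
  have hall0 : ∀ l : ℕ, Ψ l 0 0 ∈ U := by
    intro l
    induction l with
    | zero => exact hzero00
    | succ k ih => exact upMove k ih
  rw [eq_top_iff, ← hspan, Submodule.span_le]
  rintro _ ⟨t, rfl⟩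
  obtain ⟨⟨l, m, n⟩, hr⟩ := t
  exact (bridge l m n hr).mpr (hall0 l)


end Stmt14
end

section
/- Let V be as above and suppose (·,·) is an inner product on V in which L₃, J₃, C₀ and L² := L₃² + (1/2)(L₊L₋+L₋L₊) are symmetric and (L±)* = L∓, (J±)* = J∓. Then there is a positive constant r with (Ψ_{lmn}, Ψ_{l'm'n'}) = r(2l+1) δ_{ll'} δ_{mm'} δ_{nn'}. -/
namespace Stmt15

def InRange (l : ℕ) (m n : ℤ) : Prop := |m| ≤ (l:ℤ) ∧ |n| ≤ (l:ℤ)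

/-- Uniqueness of the inner product on the `p = q = 3` physical state space: any
inner product in which `L₃, J₃, C₀, L²` are symmetric and `(L±)* = L∓`, `(J±)* = J∓`
is a positive multiple of `(Ψ_{lmn}, Ψ_{l'm'n'}) = (2l+1)δ_{ll'}δ_{mm'}δ_{nn'}`. -/
theorem inner_product_unique
    (V : Type*) [AddCommGroup V] [Module ℂ V]
    (Ψ : ℕ → ℤ → ℤ → V)
    (hzero : ∀ (l : ℕ) (m n : ℤ), ¬ InRange l m n → Ψ l m n = 0)
    (hindep : LinearIndependent ℂ
      (fun t : {t : ℕ × ℤ × ℤ // InRange t.1 t.2.1 t.2.2} =>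
        Ψ t.1.1 t.1.2.1 t.1.2.2))
    (hspan : Submodule.span ℂ
      (Set.range fun t : {t : ℕ × ℤ × ℤ // InRange t.1 t.2.1 t.2.2} =>
        Ψ t.1.1 t.1.2.1 t.1.2.2) = ⊤)
    (L3 J3 Lp Lm Jp Jm C0 : V →ₗ[ℂ] V)
    (hL3 : ∀ (l : ℕ) (m n : ℤ), InRange l m n → L3 (Ψ l m n) = (m:ℂ) • Ψ l m n)
    (hJ3 : ∀ (l : ℕ) (m n : ℤ), InRange l m n → J3 (Ψ l m n) = (n:ℂ) • Ψ l m n)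
    (hLp : ∀ (l : ℕ) (m n : ℤ), InRange l m n →
      Lp (Ψ l m n) = (Real.sqrt (((l:ℝ) + m + 1) * ((l:ℝ) - m)) : ℂ) • Ψ l (m+1) n)
    (hLm : ∀ (l : ℕ) (m n : ℤ), InRange l m n →
      Lm (Ψ l m n) = (Real.sqrt (((l:ℝ) - m + 1) * ((l:ℝ) + m)) : ℂ) • Ψ l (m-1) n)
    (hJp : ∀ (l : ℕ) (m n : ℤ), InRange l m n →
      Jp (Ψ l m n) = (Real.sqrt (((l:ℝ) + n + 1) * ((l:ℝ) - n)) : ℂ) • Ψ l m (n+1))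
    (hJm : ∀ (l : ℕ) (m n : ℤ), InRange l m n →
      Jm (Ψ l m n) = (Real.sqrt (((l:ℝ) - n + 1) * ((l:ℝ) + n)) : ℂ) • Ψ l m (n-1))
    (hC0 : ∀ (l : ℕ) (m n : ℤ), InRange l m n →
      C0 (Ψ l m n) =
        ((Real.sqrt (((l:ℝ) - m + 1) * ((l:ℝ) + m + 1) * ((l:ℝ) - n + 1) * ((l:ℝ) + n + 1))
            / (2*(l:ℝ) + 3) : ℝ) : ℂ) • Ψ (l+1) m n
        + ((Real.sqrt (((l:ℝ) - m) * ((l:ℝ) + m) * ((l:ℝ) - n) * ((l:ℝ) + n))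
            / (2*(l:ℝ) - 1) : ℝ) : ℂ) • Ψ (l-1) m n)
    -- an inner product: Hermitian sesquilinear, conjugate-linear in the first slot,
    -- positive definite
    (B : V → V → ℂ)
    (hadd1 : ∀ x y z, B (x + y) z = B x z + B y z)
    (hadd2 : ∀ x y z, B x (y + z) = B x y + B x z)
    (hsmul1 : ∀ (a : ℂ) x y, B (a • x) y = (starRingEnd ℂ) a * B x y)
    (hsmul2 : ∀ (a : ℂ) x y, B x (a • y) = a * B x y)
    (hherm : ∀ x y, B x y = (starRingEnd ℂ) (B y x))
    (hpos : ∀ x, x ≠ 0 → 0 < (B x x).re)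
    -- symmetry and adjointness relations
    (hsymL3 : ∀ x y, B (L3 x) y = B x (L3 y))
    (hsymJ3 : ∀ x y, B (J3 x) y = B x (J3 y))
    (hsymC0 : ∀ x y, B (C0 x) y = B x (C0 y))
    (hsymL2 : ∀ x y,
      B (((L3 ∘ₗ L3) + (1/2 : ℂ) • ((Lp ∘ₗ Lm) + (Lm ∘ₗ Lp))) x) y
        = B x (((L3 ∘ₗ L3) + (1/2 : ℂ) • ((Lp ∘ₗ Lm) + (Lm ∘ₗ Lp))) y))
    (hadjL : ∀ x y, B (Lp x) y = B x (Lm y))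
    (hadjJ : ∀ x y, B (Jp x) y = B x (Jm y)) :
    ∃ r : ℝ, 0 < r ∧
      ∀ (l : ℕ) (m n : ℤ) (l' : ℕ) (m' n' : ℤ),
        InRange l m n → InRange l' m' n' →
        B (Ψ l m n) (Ψ l' m' n')
          = if l = l' ∧ m = m' ∧ n = n' then ((r * (2*(l:ℝ) + 1) : ℝ) : ℂ) else 0 := by
  classical
  have hne : ∀ (l : ℕ) (m n : ℤ), InRange l m n → Ψ l m n ≠ 0 := fun l m n h =>
    hindep.ne_zero ⟨(l, m, n), h⟩
  -- orthogonality of eigenvectors of a symmetric operator with distinct real eigenvalues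
  have horth : ∀ (T : V →ₗ[ℂ] V), (∀ x y, B (T x) y = B x (T y)) →
      ∀ (a b : ℝ) (x y : V), T x = (a:ℂ) • x → T y = (b:ℂ) • y → a ≠ b → B x y = 0 := by
    intro T hsym a b x y hx hy hab
    have h1 : (a:ℂ) * B x y = (b:ℂ) * B x y := by
      have h2 := hsym x y
      rw [hx, hy, hsmul1, hsmul2, Complex.conj_ofReal] at h2
      exact h2
    have h3 : ((a:ℂ) - b) * B x y = 0 := by linear_combination h1
    rcases mul_eq_zero.mp h3 with h | h
    · exact absurd (by exact_mod_cast sub_eq_zero.mp h) hab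
    · exact h
  have hL3e : ∀ (l : ℕ) (m n : ℤ), InRange l m n →
      L3 (Ψ l m n) = (((m:ℝ)):ℂ) • Ψ l m n := by
    intro l m n h; rw [hL3 l m n h]; norm_cast
  have hJ3e : ∀ (l : ℕ) (m n : ℤ), InRange l m n →
      J3 (Ψ l m n) = (((n:ℝ)):ℂ) • Ψ l m n := by
    intro l m n h; rw [hJ3 l m n h]; norm_cast
  have horthm : ∀ (l : ℕ) (m n : ℤ) (l' : ℕ) (m' n' : ℤ), InRange l m n → InRange l' m' n' →
      m ≠ m' → B (Ψ l m n) (Ψ l' m' n') = 0 := by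
    intro l m n l' m' n' h h' hmm
    exact horth L3 hsymL3 (m:ℝ) (m':ℝ) _ _ (hL3e l m n h) (hL3e l' m' n' h')
      (fun e => hmm (by exact_mod_cast e))
  have horthn : ∀ (l : ℕ) (m n : ℤ) (l' : ℕ) (m' n' : ℤ), InRange l m n → InRange l' m' n' →
      n ≠ n' → B (Ψ l m n) (Ψ l' m' n') = 0 := by
    intro l m n l' m' n' h h' hnn
    exact horth J3 hsymJ3 (n:ℝ) (n':ℝ) _ _ (hJ3e l m n h) (hJ3e l' m' n' h')
      (fun e => hnn (by exact_mod_cast e))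
  -- L² eigenvalue computation
  have hLpLm : ∀ (l : ℕ) (m n : ℤ), InRange l m n →
      Lp (Lm (Ψ l m n)) = ((((l:ℝ) - m + 1) * ((l:ℝ) + m) : ℝ) : ℂ) • Ψ l m n := by
    intro l m n h
    obtain ⟨h1, h2⟩ := h
    have hub : m ≤ (l:ℤ) := le_of_abs_le h1
    have hlb : -(l:ℤ) ≤ m := neg_le_of_abs_le h1
    rw [hLm l m n ⟨h1, h2⟩, map_smul]
    by_cases hm : m = -(l:ℤ)
    · have hz : ((l:ℝ) + (m:ℝ)) = 0 := by
        subst hm; push_cast; ring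
      rw [hz]
      simp
    · have hin : InRange l (m-1) n := ⟨abs_le.mpr ⟨by omega, by omega⟩, h2⟩
      rw [hLp l (m-1) n hin]
      have he : Ψ l (m - 1 + 1) n = Ψ l m n := by norm_num
      rw [he, smul_smul]
      congr 1
      rw [← Complex.ofReal_mul]
      congr 1
      have h1r : (m:ℝ) ≤ (l:ℝ) := by exact_mod_cast hub
      have h2r : -(l:ℝ) ≤ (m:ℝ) := by exact_mod_cast hlb
      rw [show ((l:ℝ) + ((m-1:ℤ):ℝ) + 1) * ((l:ℝ) - ((m-1:ℤ):ℝ)) =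
          ((l:ℝ) - (m:ℝ) + 1) * ((l:ℝ) + (m:ℝ)) by push_cast; ring]
      rw [mul_comm (Real.sqrt _)]
      exact Real.mul_self_sqrt (by nlinarith)
  have hLmLp : ∀ (l : ℕ) (m n : ℤ), InRange l m n →
      Lm (Lp (Ψ l m n)) = ((((l:ℝ) + m + 1) * ((l:ℝ) - m) : ℝ) : ℂ) • Ψ l m n := by
    intro l m n h
    obtain ⟨h1, h2⟩ := h
    have hub : m ≤ (l:ℤ) := le_of_abs_le h1
    have hlb : -(l:ℤ) ≤ m := neg_le_of_abs_le h1
    rw [hLp l m n ⟨h1, h2⟩, map_smul]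
    by_cases hm : m = (l:ℤ)
    · have hz : ((l:ℝ) - (m:ℝ)) = 0 := by
        subst hm; push_cast; ring
      rw [hz]
      simp
    · have hin : InRange l (m+1) n := ⟨abs_le.mpr ⟨by omega, by omega⟩, h2⟩
      rw [hLm l (m+1) n hin]
      have he : Ψ l (m + 1 - 1) n = Ψ l m n := by norm_num
      rw [he, smul_smul]
      congr 1
      rw [← Complex.ofReal_mul]
      congr 1
      have h1r : (m:ℝ) ≤ (l:ℝ) := by exact_mod_cast hub
      have h2r : -(l:ℝ) ≤ (m:ℝ) := by exact_mod_cast hlb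
      rw [show ((l:ℝ) - ((m+1:ℤ):ℝ) + 1) * ((l:ℝ) + ((m+1:ℤ):ℝ)) =
          ((l:ℝ) + (m:ℝ) + 1) * ((l:ℝ) - (m:ℝ)) by push_cast; ring]
      rw [mul_comm (Real.sqrt _)]
      exact Real.mul_self_sqrt (by nlinarith)
  have hL2e : ∀ (l : ℕ) (m n : ℤ), InRange l m n →
      ((L3 ∘ₗ L3) + (1/2 : ℂ) • ((Lp ∘ₗ Lm) + (Lm ∘ₗ Lp))) (Ψ l m n)
        = (((l:ℝ) * ((l:ℝ)+1) : ℝ) : ℂ) • Ψ l m n := by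
    intro l m n h
    have e1 : L3 (L3 (Ψ l m n)) = (((m:ℝ)^2 : ℝ):ℂ) • Ψ l m n := by
      rw [hL3 l m n h, map_smul, hL3 l m n h, smul_smul]
      congr 1
      push_cast
      ring
    simp only [LinearMap.add_apply, LinearMap.comp_apply, LinearMap.smul_apply]
    rw [e1, hLpLm l m n h, hLmLp l m n h, ← add_smul, smul_smul, ← add_smul]
    congr 1
    push_cast
    ring
  have horthl : ∀ (l : ℕ) (m n : ℤ) (l' : ℕ) (m' n' : ℤ), InRange l m n → InRange l' m' n' →
      l ≠ l' → B (Ψ l m n) (Ψ l' m' n') = 0 := by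
    intro l m n l' m' n' h h' hll
    have key : (l:ℝ)*((l:ℝ)+1) ≠ (l':ℝ)*((l':ℝ)+1) := by
      rcases Nat.lt_or_ge l l' with h1 | h1
      · have hc : (l:ℝ) < l' := by exact_mod_cast h1
        have h0 : (0:ℝ) ≤ (l:ℝ) := Nat.cast_nonneg l
        nlinarith
      · have h2 : l' < l := lt_of_le_of_ne h1 (fun e => hll e.symm)
        have hc : (l':ℝ) < l := by exact_mod_cast h2
        have h0 : (0:ℝ) ≤ (l':ℝ) := Nat.cast_nonneg l'
        nlinarith
    exact horth _ hsymL2 ((l:ℝ)*((l:ℝ)+1)) ((l':ℝ)*((l':ℝ)+1)) _ _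
      (hL2e l m n h) (hL2e l' m' n' h') key
  -- ladder steps preserve norms
  have hstepm : ∀ (l : ℕ) (m n : ℤ), InRange l m n → InRange l (m+1) n →
      B (Ψ l (m+1) n) (Ψ l (m+1) n) = B (Ψ l m n) (Ψ l m n) := by
    intro l m n h h'
    have key := hadjL (Ψ l m n) (Ψ l (m+1) n)
    rw [hLp l m n h, hLm l (m+1) n h', hsmul1, hsmul2, Complex.conj_ofReal] at key
    have he : Ψ l (m + 1 - 1) n = Ψ l m n := by norm_num
    rw [he, show ((l:ℝ) - ((m+1:ℤ):ℝ) + 1) * ((l:ℝ) + ((m+1:ℤ):ℝ)) =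
        ((l:ℝ) + (m:ℝ) + 1) * ((l:ℝ) - (m:ℝ)) by push_cast; ring] at key
    have h1r : (m:ℝ) + 1 ≤ (l:ℝ) := by exact_mod_cast le_of_abs_le h'.1
    have h2r : -(l:ℝ) ≤ (m:ℝ) := by exact_mod_cast neg_le_of_abs_le h.1
    have hcpos : 0 < Real.sqrt (((l:ℝ) + (m:ℝ) + 1) * ((l:ℝ) - (m:ℝ))) :=
      Real.sqrt_pos.mpr (by nlinarith)
    have hc : ((Real.sqrt (((l:ℝ) + (m:ℝ) + 1) * ((l:ℝ) - (m:ℝ))) : ℝ) : ℂ) ≠ 0 :=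
      Complex.ofReal_ne_zero.mpr hcpos.ne'
    exact mul_left_cancel₀ hc key
  have hstepn : ∀ (l : ℕ) (m n : ℤ), InRange l m n → InRange l m (n+1) →
      B (Ψ l m (n+1)) (Ψ l m (n+1)) = B (Ψ l m n) (Ψ l m n) := by
    intro l m n h h'
    have key := hadjJ (Ψ l m n) (Ψ l m (n+1))
    rw [hJp l m n h, hJm l m (n+1) h', hsmul1, hsmul2, Complex.conj_ofReal] at key
    have he : Ψ l m (n + 1 - 1) = Ψ l m n := by norm_num
    rw [he, show ((l:ℝ) - ((n+1:ℤ):ℝ) + 1) * ((l:ℝ) + ((n+1:ℤ):ℝ)) =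
        ((l:ℝ) + (n:ℝ) + 1) * ((l:ℝ) - (n:ℝ)) by push_cast; ring] at key
    have h1r : (n:ℝ) + 1 ≤ (l:ℝ) := by exact_mod_cast le_of_abs_le h'.2
    have h2r : -(l:ℝ) ≤ (n:ℝ) := by exact_mod_cast neg_le_of_abs_le h.2
    have hcpos : 0 < Real.sqrt (((l:ℝ) + (n:ℝ) + 1) * ((l:ℝ) - (n:ℝ))) :=
      Real.sqrt_pos.mpr (by nlinarith)
    have hc : ((Real.sqrt (((l:ℝ) + (n:ℝ) + 1) * ((l:ℝ) - (n:ℝ))) : ℝ) : ℂ) ≠ 0 :=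
      Complex.ofReal_ne_zero.mpr hcpos.ne'
    exact mul_left_cancel₀ hc key
  -- m-independence of the norm
  have hmind : ∀ (l : ℕ) (n : ℤ) (m : ℤ), InRange l m n →
      B (Ψ l m n) (Ψ l m n) = B (Ψ l 0 n) (Ψ l 0 n) := by
    intro l n m
    induction m using Int.induction_on with
    | zero => intro _; rfl
    | succ k ih =>
      intro h
      have hb := abs_le.mp h.1
      have hk : InRange l k n := ⟨abs_le.mpr ⟨by omega, by omega⟩, h.2⟩
      rw [hstepm l k n hk h]
      exact ih hk
    | pred k ih =>
      intro h
      have hb := abs_le.mp h.1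
      have hk : InRange l (-(k:ℤ)) n := ⟨abs_le.mpr ⟨by omega, by omega⟩, h.2⟩
      have hk' : InRange l (-(k:ℤ)-1+1) n := by
        rw [show -(k:ℤ)-1+1 = -(k:ℤ) by ring]; exact hk
      have hs := hstepm l (-(k:ℤ)-1) n h hk'
      rw [show -(k:ℤ)-1+1 = -(k:ℤ) by ring] at hs
      rw [← hs]
      exact ih hk
  have hnind : ∀ (l : ℕ) (m : ℤ) (n : ℤ), InRange l m n →
      B (Ψ l m n) (Ψ l m n) = B (Ψ l m 0) (Ψ l m 0) := by
    intro l m n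
    induction n using Int.induction_on with
    | zero => intro _; rfl
    | succ k ih =>
      intro h
      have hb := abs_le.mp h.2
      have hk : InRange l m k := ⟨h.1, abs_le.mpr ⟨by omega, by omega⟩⟩
      rw [hstepn l m k hk h]
      exact ih hk
    | pred k ih =>
      intro h
      have hb := abs_le.mp h.2
      have hk : InRange l m (-(k:ℤ)) := ⟨h.1, abs_le.mpr ⟨by omega, by omega⟩⟩
      have hk' : InRange l m (-(k:ℤ)-1+1) := by
        rw [show -(k:ℤ)-1+1 = -(k:ℤ) by ring]; exact hk
      have hs := hstepn l m (-(k:ℤ)-1) h hk'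
      rw [show -(k:ℤ)-1+1 = -(k:ℤ) by ring] at hs
      rw [← hs]
      exact ih hk
  have hin0 : ∀ k : ℕ, InRange k 0 0 := fun k => ⟨by simp, by simp⟩
  have s1 : ∀ x : ℝ, 0 ≤ x → Real.sqrt (x*x*x*x) = x^2 := by
    intro x hx
    rw [show x*x*x*x = (x^2)^2 by ring]
    exact Real.sqrt_sq (by positivity)
  have hC0step : ∀ l : ℕ,
      B (Ψ (l+1) 0 0) (Ψ (l+1) 0 0)
        = (((2*(l:ℝ)+3)/(2*(l:ℝ)+1) : ℝ):ℂ) * B (Ψ l 0 0) (Ψ l 0 0) := by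
    intro l
    have key := hsymC0 (Ψ l 0 0) (Ψ (l+1) 0 0)
    rw [hC0 l 0 0 (hin0 l), hC0 (l+1) 0 0 (hin0 (l+1))] at key
    rw [hadd1, hadd2, hsmul1, hsmul1, hsmul2, hsmul2, Complex.conj_ofReal,
      Complex.conj_ofReal] at key
    simp only [Int.cast_zero, sub_zero, add_zero] at key
    rw [s1 ((l:ℝ)+1) (by positivity), s1 (l:ℝ) (by positivity),
      s1 (((l+1:ℕ):ℝ)+1) (by positivity), s1 ((l+1:ℕ):ℝ) (by positivity)] at key
    have hz1 : B (Ψ (l-1) 0 0) (Ψ (l+1) 0 0) = 0 :=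
      horthl _ _ _ _ _ _ (hin0 _) (hin0 _) (by omega)
    have hz2 : B (Ψ l 0 0) (Ψ (l+1+1) 0 0) = 0 :=
      horthl _ _ _ _ _ _ (hin0 _) (hin0 _) (by omega)
    rw [hz1, hz2, mul_zero, add_zero, mul_zero, zero_add] at key
    push_cast at key ⊢
    have c1 : (2*(l:ℂ)+1) ≠ 0 := by
      have h0 : ((2*l+1 : ℕ):ℂ) ≠ 0 := Nat.cast_ne_zero.mpr (by omega)
      push_cast at h0
      exact h0
    have c3 : (2*(l:ℂ)+3) ≠ 0 := by
      have h0 : ((2*l+3 : ℕ):ℂ) ≠ 0 := Nat.cast_ne_zero.mpr (by omega)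
      push_cast at h0
      exact h0
    have cl1 : ((l:ℂ)+1) ≠ 0 := by
      have h0 : ((l+1 : ℕ):ℂ) ≠ 0 := Nat.cast_ne_zero.mpr (by omega)
      push_cast at h0
      exact h0
    rw [show (2*((l:ℂ)+1)-1) = 2*(l:ℂ)+1 by ring] at key
    field_simp at key ⊢
    have key2 : ((l:ℂ)+1)^2 * (B (Ψ (l+1) 0 0) (Ψ (l+1) 0 0) * (2*(l:ℂ)+1))
        = ((l:ℂ)+1)^2 * (B (Ψ l 0 0) (Ψ l 0 0) * (2*(l:ℂ)+3)) := by
      have c3' : (l:ℂ)*2+3 ≠ 0 := by rw [mul_comm]; exact c3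
      have c1' : (l:ℂ)*2+1 ≠ 0 := by rw [mul_comm]; exact c1
      rw [div_eq_div_iff c3' c1'] at key
      linear_combination ((l:ℂ)+1)^2 * key
    have key3 := mul_left_cancel₀ (pow_ne_zero 2 cl1) key2
    have hinv : (1+(l:ℂ)*2)⁻¹ * (1+(l:ℂ)*2) = 1 :=
      inv_mul_cancel₀ (by rw [add_comm, mul_comm]; exact c1)
    linear_combination (1+(l:ℂ)*2)⁻¹ * key3 - B (Ψ (l+1) 0 0) (Ψ (l+1) 0 0) * hinv
  have hN : ∀ l : ℕ, B (Ψ l 0 0) (Ψ l 0 0) = ((2*(l:ℝ)+1 : ℝ):ℂ) * B (Ψ 0 0 0) (Ψ 0 0 0) := by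
    intro l
    induction l with
    | zero => norm_num
    | succ k ih =>
      rw [hC0step k, ih]
      have c1 : (2*(k:ℂ)+1) ≠ 0 := by
        have h0 : ((2*k+1 : ℕ):ℂ) ≠ 0 := Nat.cast_ne_zero.mpr (by omega)
        push_cast at h0
        exact h0
      push_cast
      field_simp
      ring
  have hreal : B (Ψ 0 0 0) (Ψ 0 0 0) = (((B (Ψ 0 0 0) (Ψ 0 0 0)).re : ℝ):ℂ) :=
    (Complex.conj_eq_iff_re.mp (hherm (Ψ 0 0 0) (Ψ 0 0 0)).symm).symm
  refine ⟨(B (Ψ 0 0 0) (Ψ 0 0 0)).re, hpos _ (hne 0 0 0 (hin0 0)), ?_⟩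
  intro l m n l' m' n' h h'
  by_cases hc : l = l' ∧ m = m' ∧ n = n'
  · obtain ⟨rfl, rfl, rfl⟩ := hc
    rw [if_pos ⟨rfl, rfl, rfl⟩]
    have h0n : InRange l 0 n := ⟨by simp, h.2⟩
    rw [hmind l n m h, hnind l 0 n h0n, hN l, hreal]
    simp only [Complex.ofReal_re]
    push_cast
    ring
  · rw [if_neg hc]
    by_cases h1 : l = l'
    · by_cases h2 : m = m'
      · exact horthn _ _ _ _ _ _ h h' (by tauto)
      · exact horthm _ _ _ _ _ _ h h' h2
    · exact horthl _ _ _ _ _ _ h h' h1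

end Stmt15
end

section
/- Let l̃, j̃ > −1 with l̃ + j̃ > 0, and let r, s, r', s' be nonnegative integers. Then the function F(z, μ) = z^{(l̃+j̃)/2 + 1 + s + r'} (1 + μ²z²)^{(s'−s)/2} / [(z+1)² + μ²z²]^{1 + (l̃+j̃+r+r'+s+s')/2} is integrable over (z,μ) ∈ (0,∞) × ℝ provided l̃ + j̃ + 2r + 2s > 0 and l̃ + j̃ + 1 + r + 2s > 0. -/
namespace Stmt17

open MeasureTheory Set Real

lemma inner_eq {z : ℝ} (hz : 0 < z) :
    (fun μ : ℝ => (((z:ℝ)+1)^2 + μ^2*z^2)⁻¹)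
      = fun μ : ℝ => ((z+1)^2)⁻¹ * (1 + (z/(z+1)*μ)^2)⁻¹ := by
  funext μ
  have h1 : (0:ℝ) < z + 1 := by linarith
  rw [← mul_inv]
  congr 1
  field_simp

lemma inner_integrable {z : ℝ} (hz : 0 < z) :
    Integrable (fun μ : ℝ => (((z:ℝ)+1)^2 + μ^2*z^2)⁻¹) := by
  have h1 : (0:ℝ) < z + 1 := by linarith
  have hc : z / (z+1) ≠ 0 := by positivity
  have h := (integrable_comp_mul_left_iff (fun x : ℝ => (1+x^2)⁻¹) hc).mpr
    integrable_inv_one_add_sq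
  have h2 := h.const_mul (((z:ℝ)+1)^2)⁻¹
  rw [inner_eq hz]
  exact h2

lemma inner_integral {z : ℝ} (hz : 0 < z) :
    ∫ μ : ℝ, (((z:ℝ)+1)^2 + μ^2*z^2)⁻¹ = π / (z*(z+1)) := by
  have h1 : (0:ℝ) < z + 1 := by linarith
  have hc : (0:ℝ) < z / (z+1) := by positivity
  rw [inner_eq hz, integral_const_mul,
    Measure.integral_comp_mul_left (fun x : ℝ => (1+x^2)⁻¹) (z/(z+1)),
    integral_univ_inv_one_add_sq, smul_eq_mul,
    abs_of_pos (inv_pos.mpr hc)]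
  field_simp

lemma outer_integrable {α β : ℝ} (hα : -1 < α) (hβ : β ≤ 0) (hαβ : α + β < -1) :
    IntegrableOn (fun z : ℝ => z ^ α * (z+1) ^ β) (Ioi (0:ℝ)) := by
  have hmeas : Measurable fun z : ℝ => z ^ α * (z+1) ^ β := by measurability
  rw [← Ioc_union_Ioi_eq_Ioi (zero_le_one (α := ℝ))]
  apply IntegrableOn.union
  · apply (integrableOn_Ioc_iff_integrableOn_Ioo).mpr
    apply Integrable.mono' ((intervalIntegral.integrableOn_Ioo_rpow_iff zero_lt_one).mpr hα)
      hmeas.aestronglyMeasurable.restrict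
    filter_upwards [ae_restrict_mem measurableSet_Ioo] with z hz
    have hz0 : 0 < z := hz.1
    rw [norm_of_nonneg (mul_nonneg (rpow_nonneg hz0.le _) (rpow_nonneg (by linarith) _))]
    calc z ^ α * (z+1) ^ β ≤ z ^ α * 1 :=
          mul_le_mul_of_nonneg_left
            (rpow_le_one_of_one_le_of_nonpos (by linarith) hβ) (rpow_nonneg hz0.le _)
      _ = z ^ α := mul_one _
  · apply Integrable.mono' (integrableOn_Ioi_rpow_of_lt (by linarith : α + β < -1) one_pos)
      hmeas.aestronglyMeasurable.restrict
    filter_upwards [ae_restrict_mem measurableSet_Ioi] with z hz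
    have hz0 : (0:ℝ) < z := lt_trans one_pos hz
    rw [norm_of_nonneg (mul_nonneg (rpow_nonneg hz0.le _) (rpow_nonneg (by linarith) _))]
    calc z ^ α * (z+1) ^ β ≤ z ^ α * z ^ β :=
          mul_le_mul_of_nonneg_left
            (rpow_le_rpow_of_nonpos hz0 (by linarith) hβ) (rpow_nonneg hz0.le _)
      _ = z ^ (α + β) := (rpow_add hz0 _ _).symm

lemma G_integrable {p c : ℝ} (hp : 0 < p) (hpc : p + c < 1) :
    IntegrableOn
      (fun zμ : ℝ × ℝ => zμ.1 ^ p * (zμ.1+1) ^ c * ((zμ.1+1)^2 + zμ.2^2*zμ.1^2)⁻¹)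
      (Ioi (0:ℝ) ×ˢ (univ : Set ℝ)) := by
  have hGm : Measurable
      (fun zμ : ℝ × ℝ => zμ.1 ^ p * (zμ.1+1) ^ c * ((zμ.1+1)^2 + zμ.2^2*zμ.1^2)⁻¹) := by
    have h1 : Measurable fun zμ : ℝ × ℝ => zμ.1 ^ p := by measurability
    have h2 : Measurable fun zμ : ℝ × ℝ => (zμ.1+1) ^ c := by measurability
    have h3 : Measurable fun zμ : ℝ × ℝ => ((zμ.1+1)^2 + zμ.2^2*zμ.1^2)⁻¹ :=
      (((measurable_fst.add_const 1).pow_const 2).add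
        ((measurable_snd.pow_const 2).mul (measurable_fst.pow_const 2))).inv
    exact (h1.mul h2).mul h3
  rw [IntegrableOn, Measure.volume_eq_prod, ← Measure.prod_restrict, Measure.restrict_univ]
  rw [integrable_prod_iff hGm.aestronglyMeasurable]
  constructor
  · filter_upwards [ae_restrict_mem measurableSet_Ioi] with z hz
    exact (inner_integrable hz).const_mul _
  · have hout : IntegrableOn (fun z : ℝ => π * (z ^ (p-1) * (z+1) ^ (c-1))) (Ioi (0:ℝ)) :=
      (outer_integrable (by linarith) (by linarith) (by linarith)).const_mul π
    apply hout.congr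
    filter_upwards [ae_restrict_mem measurableSet_Ioi] with z hz
    have hz0 : (0:ℝ) < z := hz
    have hz1 : (0:ℝ) < z + 1 := by linarith
    have hnn : ∀ μ : ℝ, 0 ≤ z ^ p * (z+1) ^ c * (((z:ℝ)+1)^2 + μ^2*z^2)⁻¹ := by
      intro μ
      have : (0:ℝ) < (z+1)^2 + μ^2*z^2 := by positivity
      exact mul_nonneg (mul_nonneg (rpow_nonneg hz0.le _) (rpow_nonneg hz1.le _))
        (inv_nonneg.mpr this.le)
    have : (fun μ : ℝ => ‖z ^ p * (z+1) ^ c * (((z:ℝ)+1)^2 + μ^2*z^2)⁻¹‖)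
        = fun μ : ℝ => (z ^ p * (z+1) ^ c) * (((z:ℝ)+1)^2 + μ^2*z^2)⁻¹ := by
      funext μ
      rw [norm_of_nonneg (hnn μ)]
    rw [this, integral_const_mul, inner_integral hz0]
    rw [rpow_sub_one hz0.ne', rpow_sub_one hz1.ne']
    field_simp


/-- The key group-averaging convergence estimate: the function
`F(z,μ) = z^{(l̃+j̃)/2+1+s+r'} (1+μ²z²)^{(s'−s)/2} / [(z+1)²+μ²z²]^{1+(l̃+j̃+r+r'+s+s')/2}`
is integrable over `(0,∞) × ℝ`. -/
theorem group_averaging_integrable (lt jt : ℝ)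
    (hl : -1 < lt) (hj : -1 < jt) (hlj : 0 < lt + jt)
    (r s r' s' : ℕ)
    (h1 : 0 < lt + jt + 2*(r:ℝ) + 2*(s:ℝ))
    (h2 : 0 < lt + jt + 1 + (r:ℝ) + 2*(s:ℝ)) :
    MeasureTheory.IntegrableOn
      (fun zμ : ℝ × ℝ =>
        zμ.1 ^ ((lt + jt)/2 + 1 + (s:ℝ) + (r':ℝ))
          * (1 + zμ.2^2 * zμ.1^2) ^ (((s':ℝ) - (s:ℝ))/2)
          / ((zμ.1 + 1)^2 + zμ.2^2 * zμ.1^2)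
              ^ (1 + (lt + jt + (r:ℝ) + (r':ℝ) + (s:ℝ) + (s':ℝ))/2))
      (Set.Ioi (0:ℝ) ×ˢ (Set.univ : Set ℝ)) := by
  have hrn : (0:ℝ) ≤ (r:ℝ) := Nat.cast_nonneg r
  have hsn : (0:ℝ) ≤ (s:ℝ) := Nat.cast_nonneg s
  have hrn' : (0:ℝ) ≤ (r':ℝ) := Nat.cast_nonneg r'
  have hsn' : (0:ℝ) ≤ (s':ℝ) := Nat.cast_nonneg s'
  -- parameters
  set p : ℝ := (lt + jt)/2 + 1 + (s:ℝ) + (r':ℝ) with hpdef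
  set q : ℝ := 1 + (lt + jt + (r:ℝ) + (r':ℝ) + (s:ℝ) + (s':ℝ))/2 with hqdef
  set e : ℝ := ((s':ℝ) - (s:ℝ))/2 with hedef
  set q0 : ℝ := 1 + (lt + jt)/2 + ((r:ℝ) + (r':ℝ) + (s:ℝ))/2 with hq0def
  set c : ℝ := 2 - 2*q0 with hcdef
  have hp : 0 < p := by rw [hpdef]; linarith
  have hpc : p + c < 1 := by rw [hpdef, hcdef, hq0def]; linarith
  have hG := G_integrable hp hpc
  have hFm : Measurable (fun zμ : ℝ × ℝ =>
      zμ.1 ^ p * (1 + zμ.2^2 * zμ.1^2) ^ e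
        / ((zμ.1 + 1)^2 + zμ.2^2 * zμ.1^2) ^ q) := by
    have hm1 : Measurable fun zμ : ℝ × ℝ => zμ.1 ^ p := measurable_fst.pow_const p
    have hm2 : Measurable fun zμ : ℝ × ℝ => (1 + zμ.2^2 * zμ.1^2) ^ e :=
      (((measurable_snd.pow_const 2).mul (measurable_fst.pow_const 2)).const_add 1).pow_const e
    have hm3 : Measurable fun zμ : ℝ × ℝ => ((zμ.1 + 1)^2 + zμ.2^2 * zμ.1^2) ^ q :=
      ((((measurable_fst.add_const 1).pow_const 2).add
        ((measurable_snd.pow_const 2).mul (measurable_fst.pow_const 2))).pow_const q)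
    exact ((hm1.mul hm2).div hm3)
  apply Integrable.mono' hG hFm.aestronglyMeasurable.restrict
  filter_upwards [ae_restrict_mem (measurableSet_Ioi.prod MeasurableSet.univ)] with zμ hzμ
  obtain ⟨z, μ⟩ := zμ
  have hz : 0 < z := hzμ.1
  have hz1 : (0:ℝ) < z + 1 := by linarith
  simp only
  have hsq : (1:ℝ) ≤ (z+1)^2 := by nlinarith
  have hμz : (0:ℝ) ≤ μ^2 * z^2 := by positivity
  set D : ℝ := (z+1)^2 + μ^2*z^2 with hDdef
  have hDpos : 0 < D := by rw [hDdef]; nlinarith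
  have hD1 : (1:ℝ) ≤ D := by rw [hDdef]; linarith
  have hA1 : (1:ℝ) ≤ 1 + μ^2*z^2 := by linarith
  have hAD : 1 + μ^2*z^2 ≤ D := by rw [hDdef]; linarith
  have hFnn : (0:ℝ) ≤ z ^ p * (1 + μ^2*z^2) ^ e / D ^ q :=
    div_nonneg (mul_nonneg (rpow_nonneg hz.le _) (rpow_nonneg (by linarith) _))
      (rpow_nonneg hDpos.le _)
  rw [norm_of_nonneg hFnn]
  have hq0' : (0:ℝ) < q0 - 1 := by rw [hq0def]; linarith
  have step1 : (1 + μ^2*z^2) ^ e / D ^ q ≤ D ^ (-q0) := by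
    have hDq : (0:ℝ) < D ^ q := rpow_pos_of_pos hDpos q
    rcases le_total (s:ℝ) (s':ℝ) with hss | hss
    · have he0 : 0 ≤ e := by rw [hedef]; linarith
      calc (1 + μ^2*z^2) ^ e / D ^ q ≤ D ^ e / D ^ q :=
            div_le_div_of_nonneg_right ?_ hDq.le |>.trans_eq rfl
        _ = D ^ (e - q) := (rpow_sub hDpos e q).symm
        _ ≤ D ^ (-q0) := rpow_le_rpow_of_exponent_le hD1
            (by rw [hedef, hqdef, hq0def]; linarith)
      exact rpow_le_rpow (by linarith) hAD he0
    · have he0 : e ≤ 0 := by rw [hedef]; linarith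
      calc (1 + μ^2*z^2) ^ e / D ^ q ≤ 1 / D ^ q :=
            div_le_div_of_nonneg_right ?_ hDq.le |>.trans_eq rfl
        _ = D ^ (-q) := by rw [rpow_neg hDpos.le, one_div]
        _ ≤ D ^ (-q0) := rpow_le_rpow_of_exponent_le hD1
            (by rw [hqdef, hq0def]; linarith)
      exact rpow_le_one_of_one_le_of_nonpos hA1 he0
  have step2 : D ^ (-q0) ≤ (z+1) ^ c * D⁻¹ := by
    have hsplit : D ^ (-q0) = D ^ (-(q0-1)) * D⁻¹ := by
      rw [← Real.rpow_neg_one D, ← rpow_add hDpos]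
      ring_nf
    have h21 : D ^ (-(q0-1)) ≤ ((z+1)^2 : ℝ) ^ (-(q0-1)) :=
      rpow_le_rpow_of_nonpos (by positivity) (by rw [hDdef]; linarith) (by linarith)
    have h22 : ((z+1)^2 : ℝ) ^ (-(q0-1)) = (z+1) ^ c := by
      rw [← rpow_natCast (z+1) 2, ← rpow_mul hz1.le]
      rw [hcdef]
      norm_num
      ring_nf
    rw [hsplit, ← h22]
    exact mul_le_mul_of_nonneg_right h21 (inv_nonneg.mpr hDpos.le)
  calc z ^ p * (1 + μ^2*z^2) ^ e / D ^ q
      = z ^ p * ((1 + μ^2*z^2) ^ e / D ^ q) := mul_div_assoc _ _ _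
    _ ≤ z ^ p * D ^ (-q0) := mul_le_mul_of_nonneg_left step1 (rpow_nonneg hz.le p)
    _ ≤ z ^ p * ((z+1) ^ c * D⁻¹) := mul_le_mul_of_nonneg_left step2 (rpow_nonneg hz.le p)
    _ = z ^ p * (z+1) ^ c * D⁻¹ := (mul_assoc _ _ _).symm

end Stmt17
end

section
/- For m', n' ∈ ℕ, the function G(z, μ) = z² / [(z+1)² + μ²z²]² · ( [(z−1)² + μ²z²] / [(z+1)² + μ²z²] )^{(m'+n')/2} is integrable over (z,μ) ∈ (0,∞) × ℝ. -/
open MeasureTheory Set Real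

namespace Stmt18

lemma integrable_shift : MeasureTheory.IntegrableOn
    (fun z : ℝ => ((z + 1) ^ 2)⁻¹) (Set.Ioi (0:ℝ)) := by
  have h0 : IntegrableOn (fun t : ℝ => t ^ (-2 : ℝ)) (Ioi 1) :=
    integrableOn_Ioi_rpow_of_lt (by norm_num) one_pos
  have h1 : IntegrableOn (fun t : ℝ => (t ^ 2)⁻¹) (Ioi 1) := by
    refine h0.congr_fun (fun x hx => ?_) measurableSet_Ioi
    have hx0 : (0:ℝ) ≤ x := le_of_lt (lt_trans one_pos hx)
    beta_reduce
    rw [Real.rpow_neg hx0]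
    norm_num [Real.rpow_natCast x 2]
  have hmp : MeasurePreserving (fun x : ℝ => x + 1)
      (volume.restrict (Ioi 0)) (volume.restrict (Ioi 1)) := by
    have h := (measurePreserving_add_right volume (1:ℝ)).restrict_preimage
      (measurableSet_Ioi (a := (1:ℝ)))
    have hs : (fun x : ℝ => x + 1) ⁻¹' Ioi 1 = Ioi 0 := by
      ext x; simp [Set.mem_Ioi]
    rwa [hs] at h
  have hm : AEStronglyMeasurable (fun t : ℝ => (t ^ 2)⁻¹) (volume.restrict (Ioi 1)) :=
    ((measurable_id.pow_const 2).inv).aestronglyMeasurable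
  exact (hmp.integrable_comp hm).2 h1

/-- The convergence estimate for the modified test space in the `p = 1`, `q = 3` case:
`G(z,μ) = z²/[(z+1)²+μ²z²]² · ([(z−1)²+μ²z²]/[(z+1)²+μ²z²])^{(m'+n')/2}` is
integrable over `(0,∞) × ℝ`. -/
theorem modified_test_space_integrable (m' n' : ℕ) :
    MeasureTheory.IntegrableOn
      (fun zμ : ℝ × ℝ =>
        zμ.1^2 / ((zμ.1 + 1)^2 + zμ.2^2 * zμ.1^2)^2
          * (((zμ.1 - 1)^2 + zμ.2^2 * zμ.1^2) / ((zμ.1 + 1)^2 + zμ.2^2 * zμ.1^2))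
              ^ (((m':ℝ) + (n':ℝ))/2))
      (Set.Ioi (0:ℝ) ×ˢ (Set.univ : Set ℝ)) := by
  have hbound : IntegrableOn
      (fun zμ : ℝ × ℝ => (3/2) * (((zμ.1 + 1) ^ 2)⁻¹ * (1 + zμ.2 ^ 2)⁻¹))
      (Ioi (0:ℝ) ×ˢ (univ : Set ℝ)) := by
    rw [IntegrableOn, Measure.volume_eq_prod, ← Measure.prod_restrict, Measure.restrict_univ]
    exact (integrable_shift.mul_prod integrable_inv_one_add_sq).const_mul _
  refine MeasureTheory.Integrable.mono hbound ?_ ?_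
  · apply Measurable.aestronglyMeasurable
    have h1 : Measurable fun p : ℝ × ℝ =>
        p.1 ^ 2 / ((p.1 + 1) ^ 2 + p.2 ^ 2 * p.1 ^ 2) ^ 2 :=
      (measurable_fst.pow_const 2).div
        ((((measurable_fst.add_const 1).pow_const 2).add
          ((measurable_snd.pow_const 2).mul (measurable_fst.pow_const 2))).pow_const 2)
    have h2 : Measurable fun p : ℝ × ℝ =>
        ((p.1 - 1) ^ 2 + p.2 ^ 2 * p.1 ^ 2) / ((p.1 + 1) ^ 2 + p.2 ^ 2 * p.1 ^ 2) :=
      (((measurable_fst.sub_const 1).pow_const 2).add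
          ((measurable_snd.pow_const 2).mul (measurable_fst.pow_const 2))).div
        (((measurable_fst.add_const 1).pow_const 2).add
          ((measurable_snd.pow_const 2).mul (measurable_fst.pow_const 2)))
    exact h1.mul ((Real.continuous_rpow_const (by positivity)).measurable.comp h2)
  · rw [MeasureTheory.ae_restrict_iff' (measurableSet_Ioi.prod MeasurableSet.univ)]
    filter_upwards with zμ hmem
    obtain ⟨z, μ⟩ := zμ
    have hz : 0 < z := hmem.1
    set A := (z - 1) ^ 2 + μ ^ 2 * z ^ 2 with hA
    set D := (z + 1) ^ 2 + μ ^ 2 * z ^ 2 with hD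
    have hDpos : 0 < D := by
      have : (0:ℝ) < (z + 1) ^ 2 := by positivity
      have : (0:ℝ) ≤ μ ^ 2 * z ^ 2 := by positivity
      simp only [hD]; linarith
    have hA0 : 0 ≤ A := by positivity
    have hAD : A ≤ D := by simp only [hA, hD]; nlinarith
    have hpow1 : (A / D) ^ (((m':ℝ) + (n':ℝ))/2) ≤ 1 :=
      Real.rpow_le_one (by positivity) ((div_le_one hDpos).2 hAD) (by positivity)
    have hpow0 : 0 ≤ (A / D) ^ (((m':ℝ) + (n':ℝ))/2) :=
      Real.rpow_nonneg (by positivity) _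
    have hineq : z ^ 2 / D ^ 2 ≤ 3/2 * (((z + 1) ^ 2)⁻¹ * (1 + μ ^ 2)⁻¹) := by
      have h2 : z ^ 2 / D ^ 2 ≤ (3/2) / ((z + 1) ^ 2 * (1 + μ ^ 2)) := by
        rw [div_le_div_iff₀ (by positivity) (by positivity)]
        have h1 : z ^ 2 ≤ (z + 1) ^ 2 := by nlinarith
        simp only [hD]
        nlinarith [sq_nonneg (μ * z), sq_nonneg (μ ^ 2 * z ^ 2),
          mul_nonneg (sq_nonneg (z + 1)) (sq_nonneg (μ * z)), sq_nonneg (z + 1)]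
      rw [div_eq_mul_inv (3/2 : ℝ), mul_inv] at h2
      exact h2
    have hG0 : 0 ≤ z ^ 2 / D ^ 2 * (A / D) ^ (((m':ℝ) + (n':ℝ))/2) := by positivity
    have hB0 : (0:ℝ) ≤ 3/2 * (((z + 1) ^ 2)⁻¹ * (1 + μ ^ 2)⁻¹) := by positivity
    rw [Real.norm_of_nonneg hG0, Real.norm_of_nonneg hB0]
    calc z ^ 2 / D ^ 2 * (A / D) ^ (((m':ℝ) + (n':ℝ))/2)
        ≤ z ^ 2 / D ^ 2 * 1 := by
          apply mul_le_mul_of_nonneg_left hpow1 (by positivity)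
      _ = z ^ 2 / D ^ 2 := mul_one _
      _ ≤ 3/2 * (((z + 1) ^ 2)⁻¹ * (1 + μ ^ 2)⁻¹) := hineq

end Stmt18
end
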